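/- With 𝒟_n as above and ∂ = 𝒟_1, define Δ_n = Σ_{i=0}^n (-1)^i C(n,i) 𝒟_{n-i} ∂^i. Then for every n ≥ 0, Δ_n commutes with multiplication by Q_1: Δ_n(Q_1 f) = Q_1 Δ_n(f) for all f ∈ R. -/

import Mathlib

open MvPolynomial

/-- The Bloch–Okounkov ring `R = ℚ[Q₁, Q₂, Q₃, …]`, with `Q k = X k` for `k : ℕ+`. -/
noncomputable abbrev BO : Type := MvPolynomial ℕ+ ℚ

/-- The index `k + 1` as an element of `ℕ+`. -/
def v (k : ℕ) : ℕ+ := ⟨k + 1, Nat.succ_pos k⟩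

/-- `Q_k` for `k : ℕ`, with the convention `Q₀ = 1`. -/
noncomputable def Qv (k : ℕ) : BO := if h : 0 < k then X ⟨k, h⟩ else 1

lemma v_inj : Function.Injective v := by
  intro a b h
  have := congrArg (fun x : ℕ+ => (x : ℕ)) h
  simpa [v] using this

lemma vars_pderiv (i : ℕ+) (f : BO) : (pderiv i f).vars ⊆ f.vars := by
  classical
  have h1 : pderiv i f = ∑ s ∈ f.support, pderiv i (monomial s (coeff s f)) := by
    rw [← map_sum]
    congr 1
    exact f.as_sum
  rw [h1]
  refine (vars_sum_subset _ _).trans ?_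
  intro k hk
  simp only [Finset.mem_biUnion] at hk
  obtain ⟨s, hs, hk⟩ := hk
  rw [pderiv_monomial] at hk
  by_cases hc : coeff s f * s i = 0
  · rw [hc] at hk
    simp [monomial_zero] at hk
  · rw [vars_monomial hc] at hk
    have hk' : k ∈ s.support := Finsupp.support_tsub hk
    rw [mem_vars]
    exact ⟨s, hs, hk'⟩

noncomputable def DL (L : List ℕ+) (f : BO) : BO := L.foldr (fun k p => pderiv k p) f

@[simp] lemma DL_nil (f : BO) : DL [] f = f := rfl
@[simp] lemma DL_cons (k : ℕ+) (L : List ℕ+) (f : BO) : DL (k :: L) f = pderiv k (DL L f) := rfl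

lemma vars_DL (L : List ℕ+) (f : BO) : (DL L f).vars ⊆ f.vars := by
  induction L with
  | nil => simp
  | cons k L ih => exact (vars_pderiv k (DL L f)).trans ih

lemma DL_add (L : List ℕ+) (f g : BO) : DL L (f + g) = DL L f + DL L g := by
  induction L with
  | nil => rfl
  | cons k L ih => simp [ih]

lemma DL_smul (L : List ℕ+) (c : ℚ) (f : BO) : DL L (c • f) = c • DL L f := by
  induction L with
  | nil => rfl
  | cons k L ih => simp [ih]

lemma DL_eq_zero {L : List ℕ+} {f : BO} (h : ∃ k ∈ L, k ∉ f.vars) : DL L f = 0 := by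
  induction L with
  | nil => simp at h
  | cons k L ih =>
    obtain ⟨k', hk', hv⟩ := h
    rcases List.mem_cons.1 hk' with rfl | hmem
    · exact pderiv_eq_zero_of_notMem_vars fun hx => hv (vars_DL L f hx)
    · rw [DL_cons, ih ⟨k', hmem, hv⟩, map_zero]

lemma DL_ofFn_X_mul (a : ℕ+) (f : BO) : ∀ (m : ℕ) (g : Fin (m + 1) → ℕ+),
    DL (List.ofFn g) (X a * f) = X a * DL (List.ofFn g) f +
      ∑ j, (if g j = a then DL (List.ofFn (fun i => g (j.succAbove i))) f else 0) := by
  intro m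
  induction m with
  | zero =>
    intro g
    have h1 : List.ofFn g = [g 0] := by simp [List.ofFn_succ]
    have h2 : ∀ j : Fin 1, List.ofFn (fun i => g (j.succAbove i)) = [] := fun j => rfl
    rw [h1]
    simp only [DL_cons, DL_nil, pderiv_mul]
    rw [Fin.sum_univ_one, h2]
    by_cases h : g 0 = a
    · simp [h, add_comm]
    · rw [if_neg h, pderiv_X_of_ne (fun hh => h hh.symm)]
      simp
  | succ m ih =>
    intro g
    have hL : List.ofFn g = g 0 :: List.ofFn (fun i => g i.succ) := List.ofFn_succ
    have key : ∀ j : Fin (m + 1),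
        pderiv (g 0)
          (if g j.succ = a
            then DL (List.ofFn (fun i => g (j.succAbove i).succ)) f else 0)
        = (if g j.succ = a then DL (List.ofFn (fun i : Fin (m+1) => g (j.succ.succAbove i))) f else 0) := by
      intro j
      by_cases h : g j.succ = a
      · rw [if_pos h, if_pos h]
        have : List.ofFn (fun i : Fin (m+1) => g (j.succ.succAbove i))
            = g 0 :: List.ofFn (fun i => g (j.succAbove i).succ) := by
          rw [List.ofFn_succ]
          congr 1
          · exact congrArg List.ofFn (funext fun i => congrArg g (Fin.succ_succAbove_succ j i))
        rw [this, DL_cons]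
      · rw [if_neg h, if_neg h, map_zero]
    have lhs_eq : DL (List.ofFn g) (X a * f)
        = pderiv (g 0) (X a) * DL (List.ofFn (fun i => g i.succ)) f
          + X a * pderiv (g 0) (DL (List.ofFn (fun i => g i.succ)) f)
          + ∑ j : Fin (m + 1),
              (if g j.succ = a then DL (List.ofFn (fun i : Fin (m+1) => g (j.succ.succAbove i))) f else 0) := by
      rw [hL, DL_cons, ih (fun i => g i.succ), map_add, map_sum, pderiv_mul]
      congr 1
      refine Finset.sum_congr rfl fun j _ => (key j).trans ?_
      congr!
    have e0 : List.ofFn (fun i : Fin (m+1) => g ((0 : Fin (m+2)).succAbove i))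
        = List.ofFn (fun i => g i.succ) := rfl
    have rhs_eq : X a * DL (List.ofFn g) f
          + ∑ j : Fin (m + 2), (if g j = a then DL (List.ofFn (fun i => g (j.succAbove i))) f else 0)
        = X a * pderiv (g 0) (DL (List.ofFn (fun i => g i.succ)) f)
          + ((if g 0 = a then DL (List.ofFn (fun i => g i.succ)) f else 0)
          + ∑ j : Fin (m + 1),
              (if g j.succ = a then DL (List.ofFn (fun i : Fin (m+1) => g (j.succ.succAbove i))) f else 0)) := by
      rw [hL, DL_cons, Fin.sum_univ_succ, e0]
    rw [lhs_eq, rhs_eq]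
    by_cases h : g 0 = a
    · rw [if_pos h, h, pderiv_X_self]
      ring
    · rw [if_neg h, pderiv_X_of_ne (fun hh => h hh.symm)]
      ring

/-- The operator `𝒟_n = Σ_{i⃗ ∈ ℤ_{≥0}ⁿ} multinomial(|i⃗|; i₁,…,iₙ) Q_{|i⃗|}
∂ⁿ/(∂Q_{i₁+1} ⋯ ∂Q_{iₙ+1})`, with `Q₀ := 1`.  In particular `𝒟₀ = 1` and `𝒟₁ = ∂`. -/
noncomputable def Dn (n : ℕ) (f : BO) : BO :=
  ∑ᶠ iv : Fin n → ℕ,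
    (Nat.multinomial Finset.univ iv : ℚ) •
      (Qv (∑ j, iv j) * (List.ofFn fun j => v (iv j)).foldr (fun k p => pderiv k p) f)

noncomputable def term (n : ℕ) (f : BO) (iv : Fin n → ℕ) : BO :=
  (Nat.multinomial Finset.univ iv : ℚ) • (Qv (∑ j, iv j) * DL (List.ofFn fun j => v (iv j)) f)

lemma Dn_def' (n : ℕ) (f : BO) : Dn n f = ∑ᶠ iv, term n f iv := rfl

noncomputable def bnd (f : BO) : ℕ := f.vars.sup (fun k => (k : ℕ))

lemma bnd_spec {f : BO} {k : ℕ+} (h : k ∈ f.vars) : (k : ℕ) ≤ bnd f := Finset.le_sup h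

lemma term_eq_zero {n B : ℕ} {f : BO} (hB : ∀ k ∈ f.vars, (k : ℕ) ≤ B)
    {iv : Fin n → ℕ} (h : ∃ j, ¬ iv j < B + 1) : term n f iv = 0 := by
  obtain ⟨j, hj⟩ := h
  have hDL : DL (List.ofFn fun j => v (iv j)) f = 0 := by
    apply DL_eq_zero
    refine ⟨v (iv j), ?_, ?_⟩
    · rw [List.mem_ofFn]
      exact ⟨j, rfl⟩
    · intro hv
      have h1 := hB _ hv
      have h2 : ((v (iv j) : ℕ+) : ℕ) = iv j + 1 := rfl
      omega
  rw [term, hDL, mul_zero, smul_zero]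

lemma Dn_eq_sum (n B : ℕ) (f : BO) (hB : ∀ k ∈ f.vars, (k : ℕ) ≤ B) :
    Dn n f = ∑ iv ∈ Fintype.piFinset (fun _ : Fin n => Finset.range (B + 1)), term n f iv := by
  rw [Dn_def']
  apply finsum_eq_sum_of_support_subset
  intro iv hiv
  simp only [Finset.coe_sort_coe, Finset.mem_coe, Fintype.mem_piFinset, Finset.mem_range]
  by_contra h
  push_neg at h
  obtain ⟨j, hj⟩ := h
  exact hiv (term_eq_zero hB ⟨j, by omega⟩)

lemma Dn_zero (f : BO) : Dn 0 f = f := by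
  rw [Dn_def', finsum_unique]
  simp [term, Qv, Nat.multinomial]

lemma Dn_add (m : ℕ) (f g : BO) : Dn m (f + g) = Dn m f + Dn m g := by
  classical
  set B := max (bnd f) (bnd g) with hBdef
  have hf : ∀ k ∈ f.vars, (k : ℕ) ≤ B := fun k hk => le_trans (bnd_spec hk) (le_max_left _ _)
  have hg : ∀ k ∈ g.vars, (k : ℕ) ≤ B := fun k hk => le_trans (bnd_spec hk) (le_max_right _ _)
  have hfg : ∀ k ∈ (f + g).vars, (k : ℕ) ≤ B := by
    intro k hk
    rcases Finset.mem_union.1 (vars_add_subset f g hk) with h | h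
    exacts [hf k h, hg k h]
  rw [Dn_eq_sum m B f hf, Dn_eq_sum m B g hg, Dn_eq_sum m B (f + g) hfg,
    ← Finset.sum_add_distrib]
  refine Finset.sum_congr rfl fun iv _ => ?_
  rw [term, term, term, DL_add, mul_add, smul_add]

lemma vars_smul_subset (c : ℚ) (f : BO) : (c • f).vars ⊆ f.vars := by
  classical
  have : c • f = C c * f := by rw [smul_eq_C_mul]
  rw [this]
  refine (vars_mul _ _).trans ?_
  simp [vars_C]

lemma Dn_smul (m : ℕ) (c : ℚ) (f : BO) : Dn m (c • f) = c • Dn m f := by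
  have hf : ∀ k ∈ f.vars, (k : ℕ) ≤ bnd f := fun k hk => bnd_spec hk
  have hcf : ∀ k ∈ (c • f).vars, (k : ℕ) ≤ bnd f := fun k hk => bnd_spec (vars_smul_subset c f hk)
  rw [Dn_eq_sum m (bnd f) f hf, Dn_eq_sum m (bnd f) (c • f) hcf, Finset.smul_sum]
  refine Finset.sum_congr rfl fun iv _ => ?_
  rw [term, term, DL_smul, mul_smul_comm, smul_comm]

lemma multinomial_insertNth {n : ℕ} (j : Fin (n + 1)) (iv : Fin n → ℕ) :
    Nat.multinomial Finset.univ (j.insertNth 0 iv) = Nat.multinomial Finset.univ iv := by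
  rw [Nat.multinomial, Nat.multinomial, Fin.sum_univ_succAbove _ j, Fin.prod_univ_succAbove _ j]
  simp [Fin.insertNth_apply_same, Fin.insertNth_apply_succAbove]

lemma sum_insertNth {n : ℕ} (j : Fin (n + 1)) (iv : Fin n → ℕ) :
    ∑ k, j.insertNth 0 iv k = ∑ k, iv k := by
  rw [Fin.sum_univ_succAbove _ j]
  simp [Fin.insertNth_apply_same, Fin.insertNth_apply_succAbove]

lemma Dn_X_mul (m : ℕ) (f : BO) :
    Dn m (X (v 0) * f) = X (v 0) * Dn m f + (m : ℚ) • Dn (m - 1) f := by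
  classical
  cases m with
  | zero => simp [Dn_zero]
  | succ s =>
    set B := max 1 (bnd f) with hBdef
    have hf : ∀ k : ℕ+, k ∈ f.vars → (k : ℕ) ≤ B :=
      fun k hk => le_trans (bnd_spec hk) (le_max_right _ _)
    have hxf : ∀ k : ℕ+, k ∈ (X (v 0) * f).vars → (k : ℕ) ≤ B := by
      intro k hk
      rcases Finset.mem_union.1 (vars_mul _ _ hk) with h | h
      · rw [vars_X] at h
        rw [Finset.mem_singleton] at h
        subst h
        exact le_trans (le_of_eq rfl) (le_max_left _ _)
      · exact hf k h
    have hs1 : (s + 1 : ℕ) - 1 = s := rfl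
    rw [hs1, Dn_eq_sum (s + 1) B _ hxf, Dn_eq_sum (s + 1) B f hf, Dn_eq_sum s B f hf]
    have expand : ∀ iv : Fin (s + 1) → ℕ,
        term (s + 1) (X (v 0) * f) iv
          = X (v 0) * term (s + 1) f iv
            + ∑ j : Fin (s + 1), (if iv j = 0 then
                (Nat.multinomial Finset.univ iv : ℚ) •
                  (Qv (∑ k, iv k) * DL (List.ofFn fun i => v (iv (j.succAbove i))) f) else 0) := by
      intro iv
      rw [term, term, DL_ofFn_X_mul (v 0) f s (fun j => v (iv j)), mul_add, smul_add,
        Finset.mul_sum, Finset.smul_sum]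
      congr 1
      · rw [mul_left_comm, mul_smul_comm]
      · refine Finset.sum_congr rfl fun j _ => ?_
        rw [mul_ite, mul_zero, smul_ite, smul_zero]
        simp only [v_inj.eq_iff]
    rw [Finset.sum_congr rfl fun iv _ => expand iv, Finset.sum_add_distrib]
    congr 1
    · rw [Finset.mul_sum]
    · rw [Finset.sum_comm]
      have inner : ∀ j : Fin (s + 1),
          (∑ iv ∈ Fintype.piFinset (fun _ : Fin (s + 1) => Finset.range (B + 1)),
            (if iv j = 0 then
                (Nat.multinomial Finset.univ iv : ℚ) •
                  (Qv (∑ k, iv k) * DL (List.ofFn fun i => v (iv (j.succAbove i))) f) else 0))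
          = ∑ iv ∈ Fintype.piFinset (fun _ : Fin s => Finset.range (B + 1)), term s f iv := by
        intro j
        rw [← Finset.sum_filter]
        refine Finset.sum_nbij' (fun iv => j.removeNth iv) (fun iv' => j.insertNth 0 iv')
          ?_ ?_ ?_ ?_ ?_
        · intro iv hiv
          rw [Finset.mem_filter] at hiv
          rw [Fintype.mem_piFinset]
          intro k
          exact Fintype.mem_piFinset.1 hiv.1 _
        · intro iv' hiv'
          rw [Finset.mem_filter, Fintype.mem_piFinset]
          refine ⟨fun k => ?_, by simp [Fin.insertNth_apply_same]⟩
          by_cases hk : k = j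
          · subst hk
            simp [Fin.insertNth_apply_same]
          · obtain ⟨i, rfl⟩ := Fin.exists_succAbove_eq hk
            simpa [Fin.insertNth_apply_succAbove] using Fintype.mem_piFinset.1 hiv' i
        · intro iv hiv
          rw [Finset.mem_filter] at hiv
          funext k
          by_cases hk : k = j
          · subst hk
            simp [Fin.insertNth_apply_same, hiv.2]
          · obtain ⟨i, rfl⟩ := Fin.exists_succAbove_eq hk
            simp [Fin.insertNth_apply_succAbove, Fin.removeNth]
        · intro iv' _
          funext i
          simp [Fin.removeNth, Fin.insertNth_apply_succAbove]
        · intro iv hiv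
          rw [Finset.mem_filter] at hiv
          have hrec : j.insertNth 0 (j.removeNth iv) = iv := by
            rw [← hiv.2]
            exact Fin.insertNth_self_removeNth j iv
          have h1 : Nat.multinomial Finset.univ iv
              = Nat.multinomial Finset.univ (j.removeNth iv) := by
            conv_lhs => rw [← hrec]
            exact multinomial_insertNth j (j.removeNth iv)
          have h2 : (∑ k, iv k) = ∑ i, j.removeNth iv i := by
            conv_lhs => rw [← hrec]
            exact sum_insertNth j (j.removeNth iv)
          rw [term, h1, h2]
          rfl
      rw [Finset.sum_congr rfl fun j (_ : j ∈ Finset.univ) => inner j]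
      rw [Finset.sum_const, Finset.card_univ, Fintype.card_fin, ← Nat.cast_smul_eq_nsmul ℚ]

lemma D1_iter (i : ℕ) (f : BO) :
    (Dn 1)^[i] (X (v 0) * f) = X (v 0) * (Dn 1)^[i] f + (i : ℚ) • (Dn 1)^[i - 1] f := by
  induction i with
  | zero => simp
  | succ k ih =>
    have hs : (Dn 1)^[k + 1] (X (v 0) * f) = Dn 1 ((Dn 1)^[k] (X (v 0) * f)) :=
      Function.iterate_succ_apply' _ _ _
    have hs2 : (Dn 1)^[k + 1] f = Dn 1 ((Dn 1)^[k] f) := Function.iterate_succ_apply' _ _ _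
    have e2 : (k + 1 : ℕ) - 1 = k := rfl
    rw [hs, ih, Dn_add, Dn_smul, Dn_X_mul, Dn_zero, hs2, e2]
    cases k with
    | zero => simp
    | succ l =>
      have e3 : (l + 1 : ℕ) - 1 = l := rfl
      have hs3 : Dn 1 ((Dn 1)^[l] f) = (Dn 1)^[l + 1] f :=
        (Function.iterate_succ_apply' _ _ _).symm
      rw [e3, hs3]
      have hc : ((l + 1 + 1 : ℕ) : ℚ) = ((l + 1 : ℕ) : ℚ) + 1 := by push_cast; ring
      rw [hc, add_smul, one_smul]
      push_cast
      simp only [one_smul]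
      abel

/-- The operator `Δ_n = Σ_{i=0}^n (-1)^i C(n,i) 𝒟_{n-i} ∂^i`, with `∂ = 𝒟₁`. -/
noncomputable def DelN (n : ℕ) (f : BO) : BO :=
  ∑ i ∈ Finset.range (n + 1),
    ((-1 : ℚ) ^ i * (Nat.choose n i : ℚ)) • Dn (n - i) ((Dn 1)^[i] f)

theorem stmt_16 (n : ℕ) (f : BO) :
    DelN n (X (v 0) * f) = X (v 0) * DelN n f := by
  set W : ℕ → BO := fun i =>
    (((-1 : ℚ) ^ i * (Nat.choose n i : ℚ)) * ((n - i : ℕ) : ℚ)) •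
      Dn (n - i - 1) ((Dn 1)^[i] f) with hW
  have key : ∀ i ∈ Finset.range (n + 1),
      ((-1 : ℚ) ^ i * (Nat.choose n i : ℚ)) • Dn (n - i) ((Dn 1)^[i] (X (v 0) * f))
        = X (v 0) * (((-1 : ℚ) ^ i * (Nat.choose n i : ℚ)) • Dn (n - i) ((Dn 1)^[i] f))
          + (W i - (if i = 0 then 0 else W (i - 1))) := by
    intro i _
    rw [D1_iter, Dn_add, Dn_smul, Dn_X_mul, smul_add, smul_add, smul_smul, smul_smul,
      ← mul_smul_comm, add_assoc]
    congr 1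
    have hc2 : (((-1 : ℚ) ^ i * (Nat.choose n i : ℚ)) * (i : ℚ)) •
        Dn (n - i) ((Dn 1)^[i - 1] f) = -(if i = 0 then 0 else W (i - 1)) := by
      cases i with
      | zero => simp
      | succ k =>
        rw [if_neg (Nat.succ_ne_zero k)]
        have h1 : (k + 1 : ℕ) - 1 = k := rfl
        have h2 : n - (k + 1) = n - k - 1 := by omega
        have h3 : ((-1 : ℚ) ^ (k + 1) * (n.choose (k + 1) : ℚ)) * ((k + 1 : ℕ) : ℚ)
            = -(((-1 : ℚ) ^ k * (n.choose k : ℚ)) * ((n - k : ℕ) : ℚ)) := by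
          have hq : (n.choose (k + 1) : ℚ) * ((k + 1 : ℕ) : ℚ)
              = (n.choose k : ℚ) * ((n - k : ℕ) : ℚ) := by
            exact_mod_cast congrArg (fun x : ℕ => (x : ℚ)) (Nat.choose_succ_right_eq n k)
          linear_combination (-(-1 : ℚ) ^ k) * hq
        have h4 : ((Nat.succ k : ℕ) : ℚ) = ((k + 1 : ℕ) : ℚ) := rfl
        rw [h1, h2, h4, h3, neg_smul]
    rw [hc2, ← sub_eq_add_neg]
  rw [DelN, DelN, Finset.sum_congr rfl key, Finset.sum_add_distrib, ← Finset.mul_sum]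
  have h2 : ∑ i ∈ Finset.range (n + 1), (if i = 0 then (0 : BO) else W (i - 1))
      = ∑ i ∈ Finset.range n, W i := by
    rw [Finset.sum_range_succ']
    simp
  have h1 : ∑ i ∈ Finset.range (n + 1), W i = (∑ i ∈ Finset.range n, W i) + W n :=
    Finset.sum_range_succ W n
  have hWn : W n = 0 := by
    rw [hW]
    simp
  rw [Finset.sum_sub_distrib, h1, h2, hWn, add_zero, sub_self, add_zero]
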